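/- arXiv:1911.10072 — 2 statements merged into one kernel-verified Lean document; each statement's English description precedes it below -/
import Mathlib

section
/- If f is in the kernel of the Toeplitz operator T_g on H^2 (for g ∈ L^∞ of the unit circle) and f(0) = 0, then the backward shift S*f = (f - f(0))/z also lies in the kernel of T_g. That is, the kernel of a Toeplitz operator is nearly S*-invariant. -/
open MeasureTheory Complex Real ComplexConjugate
open scoped ENNReal

noncomputable section

instance : Fact (0 < 2 * π) := ⟨by positivity⟩

/-- The unit circle, modelled as `ℝ / 2πℤ`. -/
abbrev UnitCircle : Type := AddCircle (2 * π)

/-- Normalized Haar (Lebesgue) measure on the circle. -/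
abbrev μc : Measure UnitCircle := AddCircle.haarAddCircle

/-- The space `L²(𝕋)`. -/
abbrev L2T : Type := Lp ℂ 2 μc

/-- The Hardy space `H²`, the closed span of `{eⁱⁿᵗ : n ≥ 0}` inside `L²(𝕋)`. -/
def H2 : Submodule ℂ L2T :=
  (Submodule.span ℂ (Set.range fun n : ℕ => (fourierLp 2 (n : ℤ) : L2T))).topologicalClosure

instance : CompleteSpace H2 :=
  IsClosed.completeSpace_coe (hs := Submodule.isClosed_topologicalClosure _)

/-- The orthogonal projection `P : L²(𝕋) → H²`. -/
def PH2 : L2T →L[ℂ] H2 := H2.orthogonalProjectionOnto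

/-- Multiplication of an `L²` function by an essentially bounded symbol. -/
def symbMul (g : UnitCircle → ℂ) (hg : MemLp g ∞ μc) (f : L2T) : L2T :=
  ((Lp.memLp f).smul (p := ∞) (r := 2) hg).toLp (g • ⇑f)

/-- The Toeplitz operator `T_g f = P(gf)`, viewed as a map `L²(𝕋) → L²(𝕋)`
(its restriction to `H²` is the classical Toeplitz operator). -/
def Toeplitz (g : UnitCircle → ℂ) (hg : MemLp g ∞ μc) (f : L2T) : L2T :=
  (PH2 (symbMul g hg f) : L2T)

/-- The boundary coordinate function `z = eⁱᵗ` on the circle. -/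
def zfun : UnitCircle → ℂ := fun x => fourier 1 x

lemma zfun_memLinfty : MemLp zfun ∞ μc := by
  refine memLp_top_of_bound ((fourier 1).continuous.aestronglyMeasurable) 1 ?_
  filter_upwards with x
  simp [zfun, Circle.norm_coe]

lemma conj_zfun_memLinfty : MemLp (fun x => conj (zfun x)) ∞ μc := by
  refine memLp_top_of_bound (Continuous.aestronglyMeasurable (Complex.continuous_conj.comp ((fourier 1).continuous))) 1 ?_
  filter_upwards with x
  simp [zfun, Circle.norm_coe]

/-- The backward shift `S* = T_{z̄}` on `L²`; its restriction to `H²` is the classical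
backward shift `(S^*f)(z) = (f(z)-f(0))/z`. -/
def Sstar (f : L2T) : L2T := Toeplitz (fun x => conj (zfun x)) conj_zfun_memLinfty f

/-- Evaluation of (the analytic extension of) `f` at the origin: the mean value `f(0) = ∫ f`. -/
def ev0 (f : L2T) : ℂ := ∫ x, f x ∂μc

/-- The constant function `1` as an element of `L²(𝕋)` (it is `e⁰`). -/
def onefun : L2T := fourierLp 2 (0 : ℤ)

lemma zpow_memLinfty (m : ℕ) : MemLp (fun x => zfun x ^ m) ∞ μc := by
  refine memLp_top_of_bound (Continuous.aestronglyMeasurable (by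
    exact Continuous.pow (fourier 1).continuous m)) 1 ?_
  filter_upwards with x
  simp [zfun, Circle.norm_coe]

/-- An essentially bounded symbol is in particular square-integrable: the associated `L²`
element. -/
def toL2 (g : UnitCircle → ℂ) (hg : MemLp g ∞ μc) : L2T :=
  (hg.mono_exponent le_top).toLp g

/-- A bounded symbol `g` is *analytic* (i.e. belongs to `H^∞`) iff multiplication by `g`
preserves the Hardy space `H²`. -/
def IsAnalytic (g : UnitCircle → ℂ) (hg : MemLp g ∞ μc) : Prop :=
  ∀ f : L2T, f ∈ H2 → symbMul g hg f ∈ H2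

/-- A bounded symbol is *inner* if it is analytic and unimodular a.e. on the circle. -/
def IsInner (g : UnitCircle → ℂ) (hg : MemLp g ∞ μc) : Prop :=
  IsAnalytic g hg ∧ ∀ᵐ x ∂μc, ‖g x‖ = 1

/-- The subspace `θ·H²` of `L²(𝕋)`. -/
def mulH2 (θ : UnitCircle → ℂ) (hθ : MemLp θ ∞ μc) : Submodule ℂ L2T :=
  Submodule.span ℂ {f : L2T | ∃ h ∈ H2, f = symbMul θ hθ h}

/-- The model space `K_θ = H² ⊖ θH²`. -/
def Kmodel (θ : UnitCircle → ℂ) (hθ : MemLp θ ∞ μc) : Submodule ℂ L2T :=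
  H2 ⊓ (mulH2 θ hθ)ᗮ

instance (θ : UnitCircle → ℂ) (hθ : MemLp θ ∞ μc) : CompleteSpace (Kmodel θ hθ) := by
  refine IsClosed.completeSpace_coe (hs := ?_)
  have : ((Kmodel θ hθ : Submodule ℂ L2T) : Set L2T)
      = (H2 : Set L2T) ∩ ((mulH2 θ hθ)ᗮ : Set L2T) := rfl
  rw [this]
  exact (Submodule.isClosed_topologicalClosure _).inter (Submodule.isClosed_orthogonal _)

/-- An element `u ∈ H²` is *outer* if the polynomial multiples of `u` are dense in `H²`
(Beurling). -/
def IsOuterL2 (uL : L2T) : Prop :=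
  (Submodule.span ℂ
    (Set.range fun n : ℕ => symbMul (fun x => zfun x ^ n) (zpow_memLinfty n) uL)).topologicalClosure
    = H2

open scoped ComplexInnerProductSpace

instance (U : Submodule ℂ L2T) : CompleteSpace (H2 ⊓ Uᗮ : Submodule ℂ L2T) := by
  refine IsClosed.completeSpace_coe (hs := ?_)
  have : ((H2 ⊓ Uᗮ : Submodule ℂ L2T) : Set L2T) = (H2 : Set L2T) ∩ (Uᗮ : Set L2T) := rfl
  rw [this]
  exact (Submodule.isClosed_topologicalClosure _).inter (Submodule.isClosed_orthogonal _)


section Aux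

/-- Inner product with a Fourier mode, computed as an integral. -/
lemma inner_fourierLp_eq (m : ℤ) (w : L2T) (φ : UnitCircle → ℂ) (hw : ⇑w =ᵐ[μc] φ) :
    ⟪(fourierLp 2 m : L2T), w⟫ = ∫ x, conj (fourier m x) * φ x ∂μc := by
  rw [MeasureTheory.L2.inner_def]
  refine integral_congr_ae ?_
  filter_upwards [coeFn_fourierLp 2 m, hw] with x h1 h2
  rw [RCLike.inner_apply, h1, h2, mul_comm]

lemma fourierLp_mem_H2 (n : ℕ) : (fourierLp 2 (n : ℤ) : L2T) ∈ H2 :=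
  Submodule.le_topologicalClosure _ (Submodule.subset_span ⟨n, rfl⟩)

lemma coeff_eq_zero_of_mem_H2 {u : L2T} (hu : u ∈ H2) {m : ℤ} (hm : m < 0) :
    ⟪(fourierLp 2 m : L2T), u⟫ = 0 := by
  have key : H2 ≤ LinearMap.ker (innerSL ℂ (fourierLp 2 m : L2T) : L2T →ₗ[ℂ] ℂ) := by
    refine Submodule.topologicalClosure_minimal _ ?_ ?_
    · rw [Submodule.span_le]
      rintro _ ⟨n, rfl⟩
      simp only [SetLike.mem_coe, LinearMap.mem_ker, ContinuousLinearMap.coe_coe, innerSL_apply_apply]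
      have h := (@fourierBasis (2 * π) _).orthonormal.2 (i := m) (j := (n : ℤ)) (by omega)
      rwa [coe_fourierBasis] at h
    · exact ContinuousLinearMap.isClosed_ker _
  exact key hu

lemma mem_H2_of_coeffs {u : L2T}
    (h : ∀ m : ℤ, m < 0 → ⟪(fourierLp 2 m : L2T), u⟫ = 0) : u ∈ H2 := by
  have hsum : HasSum (fun i : ℤ => fourierBasis.repr u i • (fourierBasis i : L2T)) u :=
    fourierBasis.hasSum_repr u
  have hmem : ∀ s : Finset ℤ,
      (∑ i ∈ s, fourierBasis.repr u i • (fourierBasis i : L2T)) ∈ H2 := by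
    intro s
    refine Submodule.sum_mem _ fun i _ => ?_
    rcases lt_or_ge i 0 with hi | hi
    · have hz : fourierBasis.repr u i = 0 := by
        rw [fourierBasis.repr_apply_apply, coe_fourierBasis]
        exact h i hi
      simp [hz]
    · refine Submodule.smul_mem _ _ ?_
      have : (fourierBasis i : L2T) = (fourierLp 2 ((i.toNat : ℕ) : ℤ) : L2T) := by
        rw [coe_fourierBasis, Int.toNat_of_nonneg hi]
      rw [this]
      exact fourierLp_mem_H2 i.toNat
  exact (Submodule.isClosed_topologicalClosure _).mem_of_tendsto hsum
    (Filter.Eventually.of_forall hmem)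

lemma mem_H2_orthogonal_iff {u : L2T} :
    u ∈ H2ᗮ ↔ ∀ n : ℕ, ⟪(fourierLp 2 (n : ℤ) : L2T), u⟫ = 0 := by
  constructor
  · intro hu n
    exact Submodule.inner_right_of_mem_orthogonal (fourierLp_mem_H2 n) hu
  · intro h
    rw [Submodule.mem_orthogonal]
    have key : H2 ≤ LinearMap.ker (innerSL ℂ u : L2T →ₗ[ℂ] ℂ) := by
      refine Submodule.topologicalClosure_minimal _ ?_ ?_
      · rw [Submodule.span_le]
        rintro _ ⟨n, rfl⟩
        simp only [SetLike.mem_coe, LinearMap.mem_ker, ContinuousLinearMap.coe_coe, innerSL_apply_apply]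
        rw [inner_eq_zero_symm]
        exact h n
      · exact ContinuousLinearMap.isClosed_ker _
    intro v hv
    rw [inner_eq_zero_symm]
    exact key hv

lemma toeplitz_eq_zero_iff (g : UnitCircle → ℂ) (hg : MemLp g ∞ μc) (f : L2T) :
    Toeplitz g hg f = 0 ↔
      ∀ n : ℕ, ⟪(fourierLp 2 (n : ℤ) : L2T), symbMul g hg f⟫ = 0 := by
  rw [show Toeplitz g hg f = ((H2.orthogonalProjectionOnto (symbMul g hg f) : H2) : L2T) from rfl,
    ZeroMemClass.coe_eq_zero, Submodule.orthogonalProjectionOnto_eq_zero_iff, mem_H2_orthogonal_iff]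

lemma inner_symbMul_conj_zfun (m : ℤ) (f : L2T) :
    ⟪(fourierLp 2 m : L2T),
        symbMul (fun x => conj (zfun x)) conj_zfun_memLinfty f⟫
      = ⟪(fourierLp 2 (m + 1) : L2T), f⟫ := by
  have e1 := inner_fourierLp_eq m (symbMul (fun x => conj (zfun x)) conj_zfun_memLinfty f)
      ((fun x => conj (zfun x)) • ⇑f) (MemLp.coeFn_toLp _)
  have e2 := inner_fourierLp_eq (m + 1) f ⇑f Filter.EventuallyEq.rfl
  rw [e1, e2]
  refine integral_congr_ae (Filter.Eventually.of_forall fun x => ?_)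
  simp only [Pi.smul_apply', smul_eq_mul, zfun]
  rw [fourier_add (m := m) (n := 1), map_mul]
  ring

lemma inner_symbMul_g_shift (g : UnitCircle → ℂ) (hg : MemLp g ∞ μc) (m : ℤ) (f : L2T) :
    ⟪(fourierLp 2 m : L2T),
        symbMul g hg (symbMul (fun x => conj (zfun x)) conj_zfun_memLinfty f)⟫
      = ⟪(fourierLp 2 (m + 1) : L2T), symbMul g hg f⟫ := by
  have hw : ⇑(symbMul g hg (symbMul (fun x => conj (zfun x)) conj_zfun_memLinfty f))
      =ᵐ[μc] fun x => g x * (conj (zfun x) * f x) := by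
    have h1' : ⇑(symbMul g hg (symbMul (fun x => conj (zfun x)) conj_zfun_memLinfty f))
        =ᵐ[μc] g • ⇑(symbMul (fun x => conj (zfun x)) conj_zfun_memLinfty f) :=
      MemLp.coeFn_toLp _
    have h2' : ⇑(symbMul (fun x => conj (zfun x)) conj_zfun_memLinfty f)
        =ᵐ[μc] (fun x => conj (zfun x)) • ⇑f := MemLp.coeFn_toLp _
    filter_upwards [h1', h2'] with x h1 h2
    exact h1.trans (by rw [Pi.smul_apply', smul_eq_mul, h2, Pi.smul_apply', smul_eq_mul])
  have e1 := inner_fourierLp_eq m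
      (symbMul g hg (symbMul (fun x => conj (zfun x)) conj_zfun_memLinfty f)) _ hw
  have e2 := inner_fourierLp_eq (m + 1) (symbMul g hg f) (g • ⇑f) (MemLp.coeFn_toLp _)
  rw [e1, e2]
  refine integral_congr_ae (Filter.Eventually.of_forall fun x => ?_)
  simp only [Pi.smul_apply', smul_eq_mul, zfun]
  rw [fourier_add (m := m) (n := 1), map_mul]
  ring

end Aux

/-- The kernel of a Toeplitz operator is nearly `S*`-invariant: if
`f ∈ ker T_g ⊆ H²` and `f(0) = 0`, then `S*f ∈ ker T_g`. -/
theorem toeplitz_kernel_nearly_Sstar_invariant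
    (g : UnitCircle → ℂ) (hg : MemLp g ∞ μc) (f : L2T)
    (hf : f ∈ H2) (hker : Toeplitz g hg f = 0) (h0 : ev0 f = 0) :
    Sstar f ∈ H2 ∧ Toeplitz g hg (Sstar f) = 0 := by
  have hfneg : ∀ m : ℤ, m < 0 → ⟪(fourierLp 2 m : L2T), f⟫ = 0 :=
    fun m hm => coeff_eq_zero_of_mem_H2 hf hm
  have h00 : ⟪(fourierLp 2 (0 : ℤ) : L2T), f⟫ = 0 := by
    rw [inner_fourierLp_eq 0 f ⇑f Filter.EventuallyEq.rfl]
    simpa [fourier_zero, ev0] using h0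
  set w := symbMul (fun x => conj (zfun x)) conj_zfun_memLinfty f with hwdef
  have hwH2 : w ∈ H2 := by
    apply mem_H2_of_coeffs
    intro m hm
    rw [hwdef, inner_symbMul_conj_zfun]
    rcases lt_or_eq_of_le (by omega : m + 1 ≤ 0) with h1 | h1
    · exact hfneg _ h1
    · rw [h1]; exact h00
  have hS : Sstar f = w := by
    rw [show Sstar f = ((H2.orthogonalProjectionOnto w : H2) : L2T) from rfl]
    exact (Submodule.starProjection_eq_self_iff (K := H2)).mpr hwH2
  refine ⟨by rw [hS]; exact hwH2, ?_⟩
  rw [hS, toeplitz_eq_zero_iff]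
  intro n
  rw [hwdef, inner_symbMul_g_shift]
  have := (toeplitz_eq_zero_iff g hg f).mp hker (n + 1)
  rwa [show (((n + 1 : ℕ) : ℤ)) = (n : ℤ) + 1 by push_cast; ring] at this
end
end

section
/- Let m ∈ ℕ and let R_n h = z^m h + Σ_{i=1}^n ⟨h, u_i⟩ v_i on H^2 with {u_i} orthonormal and {v_i} orthogonal. Then Ker R_n is nearly S*-invariant with defect at most n, with defect space F = span{(S*)^{m+1} v_i : 1 ≤ i ≤ n}. -/
open MeasureTheory Complex Real ComplexConjugate
open scoped ENNReal

noncomputable section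

open scoped ComplexInnerProductSpace

/-! ### Auxiliary lemmas -/

lemma symbMul_coeFn (g : UnitCircle → ℂ) (hg : MemLp g ∞ μc) (f : L2T) :
    ⇑(symbMul g hg f) =ᵐ[μc] g • ⇑f :=
  MemLp.coeFn_toLp _

lemma symbMul_add (g : UnitCircle → ℂ) (hg : MemLp g ∞ μc) (f f' : L2T) :
    symbMul g hg (f + f') = symbMul g hg f + symbMul g hg f' := by
  apply Lp.ext
  filter_upwards [symbMul_coeFn g hg (f + f'), symbMul_coeFn g hg f, symbMul_coeFn g hg f',
    Lp.coeFn_add f f', Lp.coeFn_add (symbMul g hg f) (symbMul g hg f')] with x h1 h2 h3 h4 h5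
  simp only [Pi.smul_apply', Pi.add_apply, smul_eq_mul] at h1 h2 h3 h4 h5 ⊢
  rw [h1, h5, h2, h3, h4]
  ring

lemma symbMul_smul (g : UnitCircle → ℂ) (hg : MemLp g ∞ μc) (c : ℂ) (f : L2T) :
    symbMul g hg (c • f) = c • symbMul g hg f := by
  apply Lp.ext
  filter_upwards [symbMul_coeFn g hg (c • f), symbMul_coeFn g hg f,
    Lp.coeFn_smul c f, Lp.coeFn_smul c (symbMul g hg f)] with x h1 h2 h3 h4
  simp only [Pi.smul_apply', Pi.smul_apply, smul_eq_mul] at h1 h2 h3 h4 ⊢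
  rw [h1, h4, h2, h3]
  ring

lemma symbMul_zero (g : UnitCircle → ℂ) (hg : MemLp g ∞ μc) :
    symbMul g hg (0 : L2T) = 0 := by
  have := symbMul_smul g hg 0 0
  simpa using this

lemma Toeplitz_zero (g : UnitCircle → ℂ) (hg : MemLp g ∞ μc) :
    Toeplitz g hg (0 : L2T) = 0 := by
  simp [Toeplitz, symbMul_zero]

lemma Sstar_add (f f' : L2T) : Sstar (f + f') = Sstar f + Sstar f' := by
  simp only [Sstar, Toeplitz, symbMul_add, map_add, Submodule.coe_add]

lemma Sstar_smul (c : ℂ) (f : L2T) : Sstar (c • f) = c • Sstar f := by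
  simp only [Sstar, Toeplitz, symbMul_smul, _root_.map_smul, Submodule.coe_smul]

/-- The backward shift as a linear map. -/
def SstarLM : L2T →ₗ[ℂ] L2T where
  toFun := Sstar
  map_add' := Sstar_add
  map_smul' := Sstar_smul

lemma Sstar_mem_H2 (f : L2T) : Sstar f ∈ H2 := SetLike.coe_mem _

/-- Multiplication by `z` on `L²`. -/
def Mz (f : L2T) : L2T := symbMul zfun zfun_memLinfty f

lemma norm_zfun (x : UnitCircle) : ‖zfun x‖ = 1 := by
  simp only [zfun, fourier_apply]
  exact Circle.norm_coe _

lemma norm_Mz (f : L2T) : ‖Mz f‖ = ‖f‖ := by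
  unfold Mz symbMul
  rw [Lp.norm_toLp, Lp.norm_def]
  congr 1
  refine eLpNorm_congr_norm_ae ?_
  filter_upwards with x
  simp [Pi.smul_apply', norm_smul, norm_zfun x]

/-- Multiplication by `z` as a continuous linear map. -/
def MzCLM : L2T →L[ℂ] L2T :=
  LinearMap.mkContinuous
    { toFun := Mz
      map_add' := symbMul_add zfun zfun_memLinfty
      map_smul' := symbMul_smul zfun zfun_memLinfty } 1
    (fun f => by rw [one_mul]; exact (norm_Mz f).le)

lemma MzCLM_apply (f : L2T) : MzCLM f = Mz f := by
  simp [MzCLM, LinearMap.mkContinuous_apply]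
  rfl

lemma Mz_fourierLp (k : ℕ) :
    Mz (fourierLp 2 (k : ℤ) : L2T) = (fourierLp 2 ((k : ℤ) + 1) : L2T) := by
  apply Lp.ext
  filter_upwards [symbMul_coeFn zfun zfun_memLinfty (fourierLp 2 (k : ℤ)),
    coeFn_fourierLp 2 (k : ℤ), coeFn_fourierLp 2 ((k : ℤ) + 1)] with x h1 h2 h3
  simp only [Mz] at h1 ⊢
  rw [h1, h3, Pi.smul_apply', h2, smul_eq_mul]
  rw [add_comm, fourier_add]
  rfl

lemma Mz_mem_H2 {f : L2T} (hf : f ∈ H2) : Mz f ∈ H2 := by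
  set S : Submodule ℂ L2T :=
    Submodule.span ℂ (Set.range fun n : ℕ => (fourierLp 2 (n : ℤ) : L2T)) with hS
  have hmaps : Set.MapsTo Mz (S : Set L2T) (S : Set L2T) := by
    intro x hx
    induction hx using Submodule.span_induction with
    | mem x hx =>
      obtain ⟨k, rfl⟩ := hx
      rw [Mz_fourierLp k]
      exact Submodule.subset_span ⟨k + 1, by norm_cast⟩
    | zero =>
      rw [show Mz (0 : L2T) = 0 from symbMul_zero _ _]
      exact Submodule.zero_mem _
    | add x y _ _ hx hy =>
      rw [show Mz (x + y) = Mz x + Mz y from symbMul_add _ _ x y]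
      exact Submodule.add_mem _ hx hy
    | smul c x _ hx =>
      rw [show Mz (c • x) = c • Mz x from symbMul_smul _ _ c x]
      exact Submodule.smul_mem _ _ hx
  have hcont : Continuous Mz := MzCLM.continuous
  have := hmaps.closure hcont
  exact this hf

lemma Mz_iter_mem_H2 (k : ℕ) {f : L2T} (hf : f ∈ H2) : Mz^[k] f ∈ H2 := by
  induction k with
  | zero => simpa using hf
  | succ k ih => rw [Function.iterate_succ_apply']; exact Mz_mem_H2 ih

lemma symbMul_zpow_eq_iter (m : ℕ) (f : L2T) :
    symbMul (fun x => zfun x ^ m) (zpow_memLinfty m) f = Mz^[m] f := by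
  induction m with
  | zero =>
    apply Lp.ext
    filter_upwards [symbMul_coeFn (fun x => zfun x ^ 0) (zpow_memLinfty 0) f] with x h1
    rw [Function.iterate_zero_apply, h1, Pi.smul_apply']
    simp
  | succ m ih =>
    rw [Function.iterate_succ_apply', ← ih]
    apply Lp.ext
    filter_upwards [symbMul_coeFn (fun x => zfun x ^ (m + 1)) (zpow_memLinfty (m + 1)) f,
      symbMul_coeFn zfun zfun_memLinfty
        (symbMul (fun x => zfun x ^ m) (zpow_memLinfty m) f),
      symbMul_coeFn (fun x => zfun x ^ m) (zpow_memLinfty m) f] with x h1 h2 h3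
    simp only [Pi.smul_apply', smul_eq_mul] at h1 h2 h3
    simp only [Mz]
    rw [h1, h2, h3]
    ring

lemma Toeplitz_zpow_eq_iter (m : ℕ) {f : L2T} (hf : f ∈ H2) :
    Toeplitz (fun x => zfun x ^ m) (zpow_memLinfty m) f = Mz^[m] f := by
  rw [Toeplitz, symbMul_zpow_eq_iter]
  exact (Submodule.starProjection_eq_self_iff (K := H2)).mpr (Mz_iter_mem_H2 m hf)

lemma Sstar_Mz {f : L2T} (hf : f ∈ H2) : Sstar (Mz f) = f := by
  have key : symbMul (fun x => conj (zfun x)) conj_zfun_memLinfty (Mz f) = f := by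
    apply Lp.ext
    filter_upwards [symbMul_coeFn (fun x => conj (zfun x)) conj_zfun_memLinfty (Mz f),
      symbMul_coeFn zfun zfun_memLinfty f] with x h1 h2
    rw [h1, Pi.smul_apply']
    simp only [Mz]
    rw [h2, Pi.smul_apply', smul_eq_mul, smul_eq_mul, ← mul_assoc]
    have : conj (zfun x) * zfun x = 1 := by
      rw [mul_comm, Complex.mul_conj, Complex.normSq_eq_norm_sq,
        norm_zfun x]
      norm_num
    rw [this, one_mul]
  rw [Sstar, Toeplitz, key]
  exact (Submodule.starProjection_eq_self_iff (K := H2)).mpr hf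

lemma Sstar_iter_Mz_iter (k : ℕ) {f : L2T} (hf : f ∈ H2) :
    Sstar^[k + 1] (Mz^[k] f) = Sstar f := by
  induction k with
  | zero => simp
  | succ k ih =>
    rw [Function.iterate_succ_apply' (f := Mz), Function.iterate_succ_apply (f := Sstar)]
    rw [Sstar_Mz (Mz_iter_mem_H2 k hf)]
    exact ih

lemma Sstar_iter_eq_pow (k : ℕ) (f : L2T) : Sstar^[k] f = (SstarLM ^ k) f := by
  rw [Module.End.pow_apply]
  rfl

/-- For the symbol `z^m` and `Rₙh = z^m h + Σ ⟨h,uᵢ⟩vᵢ`, the kernel of `Rₙ`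
is nearly `S*`-invariant with defect at most `n`, with defect space
`F = span{(S*)^{m+1} vᵢ}`. -/
theorem kernel_perturbed_power_shift_nearly_Sstar_invariant
    (n m : ℕ) (u v : Fin n → L2T)
    (hu : ∀ i, u i ∈ H2) (huon : Orthonormal ℂ u)
    (hv : ∀ i, v i ∈ H2) (hvorth : ∀ i j, i ≠ j → ⟪v i, v j⟫ = 0) :
    Module.finrank ℂ
        (Submodule.span ℂ (Set.range fun i => Sstar^[m + 1] (v i))) ≤ n
    ∧ ∀ h ∈ H2,
        (Toeplitz (fun x => zfun x ^ m) (zpow_memLinfty m) h + ∑ i, ⟪u i, h⟫ • v i = 0) →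
        ev0 h = 0 →
        ∃ w ∈ Submodule.span ℂ (Set.range fun i => Sstar^[m + 1] (v i)),
          Sstar h + w ∈ H2
          ∧ Toeplitz (fun x => zfun x ^ m) (zpow_memLinfty m) (Sstar h + w)
              + ∑ i, ⟪u i, Sstar h + w⟫ • v i = 0 := by
  constructor
  · have := finrank_range_le_card (R := ℂ) (b := fun i : Fin n => Sstar^[m + 1] (v i))
    simpa [Set.finrank] using this
  · intro h hh heq _
    set w : L2T := ∑ i, ⟪u i, h⟫ • Sstar^[m + 1] (v i) with hw
    have hwmem : w ∈ Submodule.span ℂ (Set.range fun i => Sstar^[m + 1] (v i)) := by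
      refine Submodule.sum_mem _ fun i _ => ?_
      exact Submodule.smul_mem _ _ (Submodule.subset_span ⟨i, rfl⟩)
    have heq' : Mz^[m] h + ∑ i, ⟪u i, h⟫ • v i = 0 := by
      rwa [Toeplitz_zpow_eq_iter m hh] at heq
    have key : Sstar h + w = 0 := by
      have happ := congrArg (fun x => (SstarLM ^ (m + 1)) x) heq'
      simp only [map_add, map_sum, _root_.map_smul, map_zero] at happ
      rw [← Sstar_iter_eq_pow] at happ
      rw [Sstar_iter_Mz_iter m hh] at happ
      rw [hw]
      convert happ using 3 with i
      rw [Sstar_iter_eq_pow]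
    refine ⟨w, hwmem, ?_, ?_⟩
    · rw [key]; exact Submodule.zero_mem _
    · rw [key, Toeplitz_zero]
      simp
end
end
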